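/- Let Q[f] = ∫₀^l |f'|² dx - L|f(0)|² on {f ∈ H¹(0,l) : f(l) = 0} with L > 0. Then the infimum of the Rayleigh quotient Q[f]/‖f‖² is bounded below by -L² - C/l for some constant C > 0 independent of l, and choosing the trial function f(x) = e^{-Lx} - e^{-L(2l - x)} shows it is bounded above by a quantity converging to -L² as l → ∞; hence the ground state energy converges to -L². -/

import Mathlib

open Real MeasureTheory Filter

/-- Rayleigh quotient of the form `Q[f] = ∫₀^l |f'|² - L|f(0)|²` on `(0,l)`. -/
noncomputable def rayleigh (L l : ℝ) (f : ℝ → ℝ) : ℝ :=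
  ((∫ x in (0:ℝ)..l, (deriv f x) ^ 2) - L * (f 0) ^ 2) /
    (∫ x in (0:ℝ)..l, (f x) ^ 2)

/-- Admissible trial functions for the form on `(0,l)` with Dirichlet
condition at `l`. -/
def admissible (l : ℝ) (f : ℝ → ℝ) : Prop :=
  ContDiff ℝ 1 f ∧ f l = 0 ∧ (∫ x in (0:ℝ)..l, (f x) ^ 2) ≠ 0

lemma my_lower (L : ℝ) (hL : 0 < L) {l : ℝ} (hl : 0 < l) {f : ℝ → ℝ}
    (hf : admissible l f) : -L ^ 2 ≤ rayleigh L l f := by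
  obtain ⟨hcd, hfl, hN⟩ := hf
  have hfc : Continuous f := hcd.continuous
  have hdc : Continuous (deriv f) := hcd.continuous_deriv le_rfl
  have hNpos : 0 < ∫ x in (0:ℝ)..l, (f x) ^ 2 :=
    lt_of_le_of_ne (intervalIntegral.integral_nonneg hl.le (fun x _ => sq_nonneg _)) (Ne.symm hN)
  have hderiv : ∀ x ∈ Set.uIcc (0:ℝ) l, HasDerivAt (fun x => (f x) ^ 2)
      (2 * f x * deriv f x) x := by
    intro x _
    have h := ((hcd.differentiable one_ne_zero) x).hasDerivAt
    have := h.fun_pow 2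
    simpa [mul_comm, mul_assoc, mul_left_comm] using this
  have hI2 : IntervalIntegrable (fun x => 2 * f x * deriv f x) volume 0 l :=
    (((continuous_const.mul hfc).mul hdc)).intervalIntegrable _ _
  have key : ∫ x in (0:ℝ)..l, 2 * f x * deriv f x = (f l) ^ 2 - (f 0) ^ 2 :=
    intervalIntegral.integral_eq_sub_of_hasDerivAt hderiv hI2
  have f0sq : (f 0) ^ 2 = -∫ x in (0:ℝ)..l, 2 * f x * deriv f x := by
    rw [key, hfl]; ring
  have hI1 : IntervalIntegrable (fun x => (deriv f x) ^ 2) volume 0 l :=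
    ((hdc.pow 2)).intervalIntegrable _ _
  have hI3 : IntervalIntegrable (fun x => (f x) ^ 2) volume 0 l :=
    ((hfc.pow 2)).intervalIntegrable _ _
  have comb : (∫ x in (0:ℝ)..l, (deriv f x) ^ 2) - L * (f 0) ^ 2
      + L ^ 2 * ∫ x in (0:ℝ)..l, (f x) ^ 2
      = ∫ x in (0:ℝ)..l, (deriv f x + L * f x) ^ 2 := by
    rw [f0sq, mul_neg, sub_neg_eq_add,
        ← intervalIntegral.integral_const_mul, ← intervalIntegral.integral_const_mul,
        ← intervalIntegral.integral_add hI1 (hI2.const_mul L),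
        ← intervalIntegral.integral_add ((hI1.add (hI2.const_mul L))) (hI3.const_mul (L^2))]
    apply intervalIntegral.integral_congr
    intro x _
    simp only [Pi.add_apply]
    ring
  have hnn : 0 ≤ ∫ x in (0:ℝ)..l, (deriv f x + L * f x) ^ 2 :=
    intervalIntegral.integral_nonneg hl.le (fun x _ => sq_nonneg _)
  have hQ : -L ^ 2 * ∫ x in (0:ℝ)..l, (f x) ^ 2
      ≤ (∫ x in (0:ℝ)..l, (deriv f x) ^ 2) - L * (f 0) ^ 2 := by
    nlinarith [comb, hnn]
  rw [rayleigh, le_div_iff₀ hNpos]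
  linarith [hQ]

-- derivative of trial function
lemma trial_hasDeriv (L l x : ℝ) :
    HasDerivAt (fun x => Real.exp (-L * x) - Real.exp (-L * (2 * l - x)))
      (-L * Real.exp (-L * x) - L * Real.exp (-L * (2 * l - x))) x := by
  have h1 : HasDerivAt (fun x : ℝ => Real.exp (-L * x)) (Real.exp (-L * x) * (-L)) x := by
    have := ((hasDerivAt_id x).const_mul (-L)).exp
    simpa using this
  have h0 : HasDerivAt (fun x : ℝ => -L * (2 * l - x)) L x := by
    have := ((hasDerivAt_id x).const_sub (2 * l)).const_mul (-L)
    simpa using this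
  have h2 : HasDerivAt (fun x : ℝ => Real.exp (-L * (2 * l - x)))
      (Real.exp (-L * (2 * l - x)) * L) x := h0.exp
  have := h1.fun_sub h2
  exact this.congr_deriv (by ring)

-- generic exponential integral
lemma int_exp_mul (c : ℝ) (hc : c ≠ 0) (a b : ℝ) :
    ∫ x in a..b, Real.exp (c * x) = (Real.exp (c * b) - Real.exp (c * a)) / c := by
  have h : ∀ x ∈ Set.uIcc a b, HasDerivAt (fun x => Real.exp (c * x) / c)
      (Real.exp (c * x)) x := by
    intro x _
    have h1 : HasDerivAt (fun x : ℝ => Real.exp (c * x)) (Real.exp (c * x) * c) x := by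
      have := ((hasDerivAt_id x).const_mul c).exp
      simpa using this
    have := h1.div_const c
    simpa [mul_div_assoc, mul_div_cancel_right₀ _ hc] using this
  have := intervalIntegral.integral_eq_sub_of_hasDerivAt h
    ((Real.continuous_exp.comp (continuous_const.mul continuous_id)).intervalIntegrable a b)
  rw [this]; ring

lemma exp_facts (L l x : ℝ) :
    Real.exp (-(2 * L) * x) = Real.exp (-L * x) ^ 2 ∧
    Real.exp (-2 * L * l) = Real.exp (-L * x) * Real.exp (-L * (2 * l - x)) ∧
    Real.exp ((2 * L) * x) * Real.exp (-L * x) ^ 2 = 1 := by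
  refine ⟨?_, ?_, ?_⟩
  · rw [pow_two, ← Real.exp_add]; congr 1; ring
  · rw [← Real.exp_add]; congr 1; ring
  · rw [pow_two, ← Real.exp_add, ← Real.exp_add, ← Real.exp_zero]; congr 1; ring

lemma sq_trial (L l x : ℝ) :
    (Real.exp (-L * x) - Real.exp (-L * (2 * l - x))) ^ 2
      = Real.exp (-(2 * L) * x) - 2 * Real.exp (-2 * L * l)
        + Real.exp (-2 * L * l) ^ 2 * Real.exp ((2 * L) * x) := by
  obtain ⟨h1, h2, h3⟩ := exp_facts L l x
  rw [h1, h2]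
  linear_combination (-(Real.exp (-L * (2 * l - x)) ^ 2)) * h3

lemma sq_trial' (L l x : ℝ) :
    (-L * Real.exp (-L * x) - L * Real.exp (-L * (2 * l - x))) ^ 2
      = L ^ 2 * Real.exp (-(2 * L) * x) + 2 * L ^ 2 * Real.exp (-2 * L * l)
        + L ^ 2 * Real.exp (-2 * L * l) ^ 2 * Real.exp ((2 * L) * x) := by
  obtain ⟨h1, h2, h3⟩ := exp_facts L l x
  rw [h1, h2]
  linear_combination (-(L ^ 2 * Real.exp (-L * (2 * l - x)) ^ 2)) * h3

lemma int_sq (L l : ℝ) (hL : 0 < L) :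
    ∫ x in (0:ℝ)..l, (Real.exp (-L * x) - Real.exp (-L * (2 * l - x))) ^ 2
      = (1 - Real.exp (-2 * L * l) ^ 2) / (2 * L) - 2 * Real.exp (-2 * L * l) * l := by
  have h2L : (2:ℝ) * L ≠ 0 := by positivity
  have hn2L : -(2 * L) ≠ 0 := by simpa using h2L
  have hcont1 : Continuous fun x : ℝ => Real.exp (-(2 * L) * x) := by fun_prop
  have hcont2 : Continuous fun x : ℝ =>
      Real.exp (-2 * L * l) ^ 2 * Real.exp ((2 * L) * x) := by fun_prop
  rw [intervalIntegral.integral_congr (g := fun x => Real.exp (-(2 * L) * x)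
      - 2 * Real.exp (-2 * L * l) + Real.exp (-2 * L * l) ^ 2 * Real.exp ((2 * L) * x))
      (fun x _ => sq_trial L l x)]
  rw [intervalIntegral.integral_add
        ((by fun_prop : Continuous fun x : ℝ => Real.exp (-(2 * L) * x) - 2 * Real.exp (-2 * L * l)).intervalIntegrable _ _)
        (hcont2.intervalIntegrable _ _),
      intervalIntegral.integral_sub (hcont1.intervalIntegrable _ _)
        (continuous_const.intervalIntegrable _ _),
      intervalIntegral.integral_const, intervalIntegral.integral_const_mul,
      int_exp_mul _ hn2L, int_exp_mul _ h2L]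
  have key : Real.exp ((2 * L) * l) * Real.exp (-2 * L * l) = 1 := by
    rw [← Real.exp_add, ← Real.exp_zero]; congr 1; ring
  have ha : Real.exp (-(2 * L) * l) = Real.exp (-2 * L * l) := by congr 1; ring
  rw [ha]
  simp only [mul_zero, Real.exp_zero, smul_eq_mul, sub_zero]
  field_simp
  simp only [show ((-(2 * L * l)):ℝ) = -2 * L * l from by ring]
  linear_combination Real.exp (-2 * L * l) * key

lemma int_dsq (L l : ℝ) (hL : 0 < L) :
    ∫ x in (0:ℝ)..l, (-L * Real.exp (-L * x) - L * Real.exp (-L * (2 * l - x))) ^ 2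
      = L ^ 2 * ((1 - Real.exp (-2 * L * l) ^ 2) / (2 * L) + 2 * Real.exp (-2 * L * l) * l) := by
  have h2L : (2:ℝ) * L ≠ 0 := by positivity
  have hn2L : -(2 * L) ≠ 0 := by simpa using h2L
  have hcont1 : Continuous fun x : ℝ => L ^ 2 * Real.exp (-(2 * L) * x) := by fun_prop
  have hcont2 : Continuous fun x : ℝ =>
      L ^ 2 * Real.exp (-2 * L * l) ^ 2 * Real.exp ((2 * L) * x) := by fun_prop
  rw [intervalIntegral.integral_congr (g := fun x => L ^ 2 * Real.exp (-(2 * L) * x)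
      + 2 * L ^ 2 * Real.exp (-2 * L * l)
      + L ^ 2 * Real.exp (-2 * L * l) ^ 2 * Real.exp ((2 * L) * x))
      (fun x _ => sq_trial' L l x)]
  rw [intervalIntegral.integral_add
        ((by fun_prop : Continuous fun x : ℝ => L ^ 2 * Real.exp (-(2 * L) * x) + 2 * L ^ 2 * Real.exp (-2 * L * l)).intervalIntegrable _ _)
        (hcont2.intervalIntegrable _ _),
      intervalIntegral.integral_add (hcont1.intervalIntegrable _ _)
        (continuous_const.intervalIntegrable _ _),
      intervalIntegral.integral_const, intervalIntegral.integral_const_mul,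
      intervalIntegral.integral_const_mul,
      int_exp_mul _ hn2L, int_exp_mul _ h2L]
  have key : Real.exp ((2 * L) * l) * Real.exp (-2 * L * l) = 1 := by
    rw [← Real.exp_add, ← Real.exp_zero]; congr 1; ring
  have ha : Real.exp (-(2 * L) * l) = Real.exp (-2 * L * l) := by congr 1; ring
  rw [ha]
  simp only [mul_zero, Real.exp_zero, smul_eq_mul, sub_zero]
  field_simp
  rw [show -(L * 2 * l) = -2 * L * l by ring, show L * 2 * l = 2 * L * l by ring]
  linear_combination Real.exp (-2 * L * l) * key

lemma trial_rayleigh (L : ℝ) (hL : 0 < L) (l : ℝ) :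
    rayleigh L l (fun x => Real.exp (-L * x) - Real.exp (-L * (2 * l - x)))
      = (L ^ 2 * ((1 - Real.exp (-2 * L * l) ^ 2) / (2 * L)
            + 2 * Real.exp (-2 * L * l) * l)
          - L * (1 - Real.exp (-2 * L * l)) ^ 2)
        / ((1 - Real.exp (-2 * L * l) ^ 2) / (2 * L)
            - 2 * Real.exp (-2 * L * l) * l) := by
  unfold rayleigh
  have hd : ∀ x, deriv (fun x => Real.exp (-L * x) - Real.exp (-L * (2 * l - x))) x
      = -L * Real.exp (-L * x) - L * Real.exp (-L * (2 * l - x)) :=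
    fun x => (trial_hasDeriv L l x).deriv
  have h0 : Real.exp (-L * (0:ℝ)) - Real.exp (-L * (2 * l - 0))
      = 1 - Real.exp (-2 * L * l) := by
    rw [show -L * (0:ℝ) = 0 by ring, Real.exp_zero,
        show -L * (2 * l - 0) = -2 * L * l by ring]
  rw [intervalIntegral.integral_congr
      (g := fun x => (-L * Real.exp (-L * x) - L * Real.exp (-L * (2 * l - x))) ^ 2)
      (fun x _ => by rw [hd x])]
  rw [int_dsq L l hL, int_sq L l hL]
  simp only []
  rw [h0]

lemma trial_int_pos (L : ℝ) (hL : 0 < L) {l : ℝ} (hl : 0 < l) :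
    0 < ∫ x in (0:ℝ)..l,
      (Real.exp (-L * x) - Real.exp (-L * (2 * l - x))) ^ 2 := by
  apply intervalIntegral.intervalIntegral_pos_of_pos_on
  · exact (Continuous.intervalIntegrable (by fun_prop) _ _)
  · intro x hx
    have hlt : -L * (2 * l - x) < -L * x := by nlinarith [hx.1, hx.2]
    have h := Real.exp_lt_exp.mpr hlt
    exact pow_pos (sub_pos.mpr h) 2
  · exact hl

lemma trial_admissible (L : ℝ) (hL : 0 < L) {l : ℝ} (hl : 0 < l) :
    ContDiff ℝ 1 (fun x => Real.exp (-L * x) - Real.exp (-L * (2 * l - x))) ∧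
    (Real.exp (-L * l) - Real.exp (-L * (2 * l - l))) = 0 ∧
    (∫ x in (0:ℝ)..l, (Real.exp (-L * x) - Real.exp (-L * (2 * l - x))) ^ 2) ≠ 0 := by
  refine ⟨by fun_prop, ?_, (trial_int_pos L hL hl).ne'⟩
  rw [show 2 * l - l = l by ring, sub_self]

lemma tendsto_a (L : ℝ) (hL : 0 < L) :
    Tendsto (fun l : ℝ => Real.exp (-2 * L * l)) atTop (nhds 0) := by
  apply Real.tendsto_exp_atBot.comp
  have h1 : Tendsto (fun l : ℝ => 2 * L * l) atTop atTop :=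
    Tendsto.const_mul_atTop (by positivity) tendsto_id
  exact (tendsto_neg_atTop_atBot.comp h1).congr (fun l => by simp)

lemma tendsto_al (L : ℝ) (hL : 0 < L) :
    Tendsto (fun l : ℝ => Real.exp (-2 * L * l) * l) atTop (nhds 0) := by
  have h1 : Tendsto (fun x : ℝ => x * Real.exp (-x)) atTop (nhds 0) := by
    simpa using tendsto_pow_mul_exp_neg_atTop_nhds_zero 1
  have h2 : Tendsto (fun l : ℝ => 2 * L * l) atTop atTop :=
    Tendsto.const_mul_atTop (by positivity) tendsto_id
  have h3 := (h1.comp h2).const_mul (1 / (2 * L))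
  simp only [mul_zero] at h3
  apply h3.congr
  intro l
  simp only [Function.comp_apply]
  rw [show -(2 * L * l) = -2 * L * l by ring]
  field_simp

lemma trial_tendsto (L : ℝ) (hL : 0 < L) :
    Tendsto (fun l : ℝ =>
      (L ^ 2 * ((1 - Real.exp (-2 * L * l) ^ 2) / (2 * L)
            + 2 * Real.exp (-2 * L * l) * l)
          - L * (1 - Real.exp (-2 * L * l)) ^ 2)
        / ((1 - Real.exp (-2 * L * l) ^ 2) / (2 * L)
            - 2 * Real.exp (-2 * L * l) * l))
      atTop (nhds (-L ^ 2)) := by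
  have ha0 := tendsto_a L hL
  have h2al : Tendsto (fun l : ℝ => 2 * Real.exp (-2 * L * l) * l) atTop (nhds 0) := by
    have := (tendsto_al L hL).const_mul 2
    simpa [mul_zero, ← mul_assoc] using this
  have hden : Tendsto (fun l : ℝ => (1 - Real.exp (-2 * L * l) ^ 2) / (2 * L)
      - 2 * Real.exp (-2 * L * l) * l) atTop
      (nhds ((1 - (0:ℝ) ^ 2) / (2 * L) - 0)) :=
    ((tendsto_const_nhds.sub (ha0.pow 2)).div_const (2 * L)).sub h2al
  have hnum : Tendsto (fun l : ℝ => L ^ 2 * ((1 - Real.exp (-2 * L * l) ^ 2) / (2 * L)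
      + 2 * Real.exp (-2 * L * l) * l) - L * (1 - Real.exp (-2 * L * l)) ^ 2) atTop
      (nhds (L ^ 2 * ((1 - (0:ℝ) ^ 2) / (2 * L) + 0) - L * (1 - (0:ℝ)) ^ 2)) :=
    (((tendsto_const_nhds.sub (ha0.pow 2)).div_const (2 * L)).add h2al).const_mul
      (L ^ 2) |>.sub (((tendsto_const_nhds.sub ha0).pow 2).const_mul L)
  have hne : ((1 - (0:ℝ) ^ 2) / (2 * L) - 0) ≠ 0 := by
    rw [sub_zero]; positivity
  have := hnum.div hden hne
  convert this using 2
  · rfl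
  · field_simp
    ring

/-- Rayleigh-quotient argument: the infimum of `Q[f]/‖f‖²` is bounded below by
`-L² - C/l`; the trial function `f(x) = e^{-Lx} - e^{-L(2l-x)}` gives an upper
bound converging to `-L²`; hence the ground state energy tends to `-L²` as
`l → ∞`. -/
theorem rayleigh_ground_state_limit (L : ℝ) (hL : 0 < L) :
    (∃ C > 0, ∀ l > 0, ∀ f, admissible l f → -L ^ 2 - C / l ≤ rayleigh L l f) ∧
    (∀ l > 0, admissible l
      (fun x => Real.exp (-L * x) - Real.exp (-L * (2 * l - x)))) ∧
    Tendsto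
      (fun l : ℝ =>
        rayleigh L l (fun x => Real.exp (-L * x) - Real.exp (-L * (2 * l - x))))
      atTop (nhds (-L ^ 2)) ∧
    Tendsto (fun l : ℝ => sInf {E : ℝ | ∃ f, admissible l f ∧ E = rayleigh L l f})
      atTop (nhds (-L ^ 2)) := by
  have hlow : ∀ l > 0, ∀ f, admissible l f → -L ^ 2 ≤ rayleigh L l f :=
    fun l hl f hf => my_lower L hL hl hf
  have htrial : ∀ l > 0, admissible l
      (fun x => Real.exp (-L * x) - Real.exp (-L * (2 * l - x))) := by
    intro l hl
    exact trial_admissible L hL hl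
  have htends : Tendsto (fun l : ℝ => rayleigh L l
      (fun x => Real.exp (-L * x) - Real.exp (-L * (2 * l - x))))
      atTop (nhds (-L ^ 2)) := by
    apply (trial_tendsto L hL).congr
    intro l
    exact (trial_rayleigh L hL l).symm
  refine ⟨⟨1, one_pos, ?_⟩, htrial, htends, ?_⟩
  · intro l hl f hf
    have h1 : (0:ℝ) < 1 / l := by positivity
    linarith [hlow l hl f hf]
  · apply tendsto_of_tendsto_of_tendsto_of_le_of_le' (tendsto_const_nhds) htends
    · filter_upwards [eventually_gt_atTop (0:ℝ)] with l hl
      refine le_csInf ⟨rayleigh L l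
        (fun x => Real.exp (-L * x) - Real.exp (-L * (2 * l - x))),
        ⟨_, htrial l hl, rfl⟩⟩ ?_
      rintro E ⟨f, hf, rfl⟩
      exact hlow l hl f hf
    · filter_upwards [eventually_gt_atTop (0:ℝ)] with l hl
      refine csInf_le ⟨-L ^ 2, ?_⟩ ⟨_, htrial l hl, rfl⟩
      rintro E ⟨f, hf, rfl⟩
      exact hlow l hl f hf
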